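/- Let S = (s_1, …, s_n) with n ≥ 2 be a list over a type with decidable equality having exactly σ distinct elements, let occ(a, S) be the number of occurrences of a in S, let H = Σ_a (occ(a,S)/n)·log₂(n/occ(a,S)) (sum over the distinct elements a of S), and for 2 ≤ i ≤ n let c_i be the number of occurrences of s_i among s_1, …, s_{i−1}. Then Σ_{i=2}^n ( ⌈log₂((i−1)/max(c_i, 1))⌉ + 1 ) ≤ n·H + 2n + (σ + 1)·(log₂ n + 2). -/

import Mathlib

open Finset

lemma lemB (m k : ℕ) : (m+k).choose m * (m^m * k^k) ≤ (m+k)^(m+k) := by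
  rw [add_pow]
  calc (m+k).choose m * (m^m * k^k) = m^m * k^((m+k)-m) * (m+k).choose m := by
        rw [Nat.add_sub_cancel_left]; ring
    _ ≤ _ := Finset.single_le_sum (f := fun j => m^j * k^((m+k)-j) * (m+k).choose j)
        (fun i _ => Nat.zero_le _) (by simp [Nat.lt_succ_iff])

lemma lemM {ι : Type*} (s : Finset ι) (f : ι → ℕ) :
    Nat.multinomial s f * ∏ i ∈ s, (f i)^(f i) ≤ (∑ i ∈ s, f i)^(∑ i ∈ s, f i) := by
  classical
  induction s using Finset.induction_on with
  | empty => simp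
  | insert _ _ ha ih =>
    rename_i a s
    rw [Nat.multinomial_insert ha, Finset.prod_insert ha, Finset.sum_insert ha]
    calc (f a + ∑ i ∈ s, f i).choose (f a) * Nat.multinomial s f *
          (f a ^ f a * ∏ i ∈ s, f i ^ f i)
        = (f a + ∑ i ∈ s, f i).choose (f a) * (f a ^ f a *
            (Nat.multinomial s f * ∏ i ∈ s, f i ^ f i)) := by ring
      _ ≤ (f a + ∑ i ∈ s, f i).choose (f a) * (f a ^ f a * (∑ i ∈ s, f i)^(∑ i ∈ s, f i)) := by
          exact Nat.mul_le_mul_left _ (Nat.mul_le_mul_left _ ih)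
      _ ≤ _ := by exact lemB (f a) (∑ i ∈ s, f i)

lemma lemN {ι : Type*} (s : Finset ι) (f : ι → ℕ) :
    Nat.factorial (∑ i ∈ s, f i) * ∏ i ∈ s, (f i)^(f i) ≤
      (∑ i ∈ s, f i)^(∑ i ∈ s, f i) * ∏ i ∈ s, Nat.factorial (f i) := by
  calc Nat.factorial (∑ i ∈ s, f i) * ∏ i ∈ s, (f i)^(f i)
      = (∏ i ∈ s, Nat.factorial (f i)) * (Nat.multinomial s f * ∏ i ∈ s, (f i)^(f i)) := by
        rw [← mul_assoc, Nat.multinomial_spec]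
    _ ≤ (∏ i ∈ s, Nat.factorial (f i)) * (∑ i ∈ s, f i)^(∑ i ∈ s, f i) :=
        Nat.mul_le_mul_left _ (lemM s f)
    _ = _ := mul_comm _ _

lemma lemC {α : Type*} [DecidableEq α] (S : List α) (d : α) :
    ∏ i ∈ Finset.range S.length, max ((S.take i).count (S.getD i d)) 1 =
      ∏ a ∈ S.toFinset, Nat.factorial (S.count a - 1) := by
  induction S using List.reverseRecOn with
  | nil => simp
  | append_singleton l x ih =>
    rw [List.length_append, List.length_singleton, Finset.prod_range_succ]
    have h1 : ∀ i ∈ Finset.range l.length,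
        max (((l ++ [x]).take i).count ((l ++ [x]).getD i d)) 1 =
        max ((l.take i).count (l.getD i d)) 1 := by
      intro i hi
      rw [Finset.mem_range] at hi
      rw [List.take_append_of_le_length hi.le, List.getD_append _ _ _ _ hi]
    rw [Finset.prod_congr rfl h1, ih]
    have h2 : (l ++ [x]).take l.length = l := List.take_left
    have h3 : (l ++ [x]).getD l.length d = x := by
      rw [List.getD_eq_getElem _ _ (by simp)]
      simp
    rw [h2, h3]
    by_cases hx : x ∈ l.toFinset
    · have hxl : x ∈ l := List.mem_toFinset.mp hx
      have hpos : 0 < l.count x := by exact List.count_pos_iff.mpr hxl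
      have ht : (l ++ [x]).toFinset = l.toFinset := by
        rw [List.toFinset_append]
        simp [Finset.union_eq_left, hxl]
      rw [ht, ← Finset.mul_prod_erase _ _ hx, ← Finset.mul_prod_erase _ _ hx]
      have hcount : ∀ b ∈ l.toFinset.erase x,
          Nat.factorial ((l ++ [x]).count b - 1) = Nat.factorial (l.count b - 1) := by
        intro b hb
        have hbx : b ≠ x := Finset.ne_of_mem_erase hb
        have hz : List.count b [x] = 0 := List.count_eq_zero.mpr (by simp [hbx])
        rw [List.count_append, hz, Nat.add_zero]
      rw [Finset.prod_congr rfl hcount]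
      have hcx : (l ++ [x]).count x = l.count x + 1 := by
        simp [List.count_append]
      rw [hcx, Nat.add_sub_cancel, max_eq_left hpos]
      rw [← Nat.mul_factorial_pred hpos.ne']
      ring
    · have hxl : x ∉ l := fun h => hx (List.mem_toFinset.mpr h)
      have hc0 : l.count x = 0 := List.count_eq_zero.mpr hxl
      have ht : (l ++ [x]).toFinset = insert x l.toFinset := by
        rw [List.toFinset_append]; ext b; simp [or_comm]
      rw [ht, Finset.prod_insert hx]
      have hcx : (l ++ [x]).count x = 1 := by
        simp [List.count_append, hc0]
      rw [hcx]
      have hcount : ∀ b ∈ l.toFinset,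
          Nat.factorial ((l ++ [x]).count b - 1) = Nat.factorial (l.count b - 1) := by
        intro b hb
        have hbx : b ≠ x := fun h => hxl (h ▸ List.mem_toFinset.mp hb)
        have hz : List.count b [x] = 0 := List.count_eq_zero.mpr (by simp [hbx])
        rw [List.count_append, hz, Nat.add_zero]
      rw [Finset.prod_congr rfl hcount]
      simp [hc0]

lemma prodmax (n : ℕ) : ∏ i ∈ Finset.range n, max i 1 = Nat.factorial (n - 1) := by
  induction n with
  | zero => simp
  | succ k ih =>
    rw [Finset.prod_range_succ, ih]
    rcases Nat.eq_zero_or_pos k with hk | hk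
    · subst hk; simp
    · rw [max_eq_left hk, Nat.succ_sub_one]
      rw [← Nat.mul_factorial_pred hk.ne']; ring

lemma logb_nat_le {x y : ℕ} (hx : 0 < x) (h : x ≤ y) :
    Real.logb 2 (x : ℝ) ≤ Real.logb 2 (y : ℝ) :=
  Real.logb_le_logb_of_le one_lt_two (by exact_mod_cast hx) (by exact_mod_cast h)

/-- Theorem 3 (comparison count): the total number of binary comparisons
`Σ_{i=2}^n (⌈log₂((i−1)/max(c_i,1))⌉ + 1)` used by the online stable sorting
algorithm is at most `nH + 2n + (σ+1)(log₂ n + 2)`.  Here the sum is written over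
zero-based positions `i` of `S` (the position-`0` term, corresponding to the first
element, is zero), `c` is the number of previous occurrences of the current
element, `σ` is the number of distinct elements and `H` is the entropy of the
distribution of the elements of `S`. -/
theorem online_binary_comparison_bound {α : Type*} [DecidableEq α] (S : List α)
    (n σ : ℕ) (hn : n = S.length) (hn2 : 2 ≤ n) (hσ : σ = S.toFinset.card) (H : ℝ)
    (hH : H = ∑ a ∈ S.toFinset,
      ((S.count a : ℝ) / n) * Real.logb 2 ((n : ℝ) / (S.count a))) :
    ((∑ i : Fin S.length, if i.val = 0 then 0 else
        ⌈Real.logb 2 ((i.val : ℝ) /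
          ((max ((S.take i.val).count (S.get i)) 1 : ℕ) : ℝ))⌉ + 1 : ℤ) : ℝ) ≤
      n * H + 2 * n + (σ + 1) * (Real.logb 2 n + 2) := by
  classical
  have hn0 : 0 < S.length := by omega
  set d : α := S.get ⟨0, hn0⟩ with hdd
  set T := S.toFinset with hT
  set m : α → ℕ := fun a => S.count a with hm
  have hsum : ∑ a ∈ T, m a = n := by
    rw [hn, hT, hm]
    have := Multiset.toFinset_sum_count_eq (↑S : Multiset α)
    simpa using this
  have hm1 : ∀ a ∈ T, 1 ≤ m a := by
    intro a ha
    exact List.count_pos_iff.mpr (List.mem_toFinset.mp ha)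
  have hmn : ∀ a ∈ T, m a ≤ n := by
    intro a _; rw [hn]; exact List.count_le_length
  -- the key counting inequality, logarithmic form
  have hN : Nat.factorial n * ∏ a ∈ T, (m a)^(m a) ≤ n^n * ∏ a ∈ T, Nat.factorial (m a) := by
    have := lemN T m; rwa [hsum] at this
  have hlogN : Real.logb 2 (Nat.factorial n : ℝ) + ∑ a ∈ T, (m a : ℝ) * Real.logb 2 (m a : ℝ)
      ≤ (n : ℝ) * Real.logb 2 (n : ℝ) + ∑ a ∈ T, Real.logb 2 (Nat.factorial (m a) : ℝ) := by
    have hpos : 0 < Nat.factorial n * ∏ a ∈ T, (m a)^(m a) := by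
      apply Nat.mul_pos (Nat.factorial_pos n)
      exact Finset.prod_pos fun a ha => Nat.pow_pos (hm1 a ha)
    have h1 := logb_nat_le hpos hN
    have e1 : Real.logb 2 ((Nat.factorial n * ∏ a ∈ T, (m a)^(m a) : ℕ) : ℝ) =
        Real.logb 2 (Nat.factorial n : ℝ) + ∑ a ∈ T, (m a : ℝ) * Real.logb 2 (m a : ℝ) := by
      push_cast
      rw [Real.logb_mul (by positivity) (by
        apply ne_of_gt; apply Finset.prod_pos; intro a ha
        have := hm1 a ha; positivity)]
      rw [Real.logb_prod _ _ (by
        intro a ha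
        have := hm1 a ha
        have h0 : (0:ℝ) < (m a : ℝ) := by exact_mod_cast this
        positivity)]
      congr 1
      exact Finset.sum_congr rfl fun a _ => Real.logb_pow 2 _ _
    have e2 : Real.logb 2 ((n^n * ∏ a ∈ T, Nat.factorial (m a) : ℕ) : ℝ) =
        (n : ℝ) * Real.logb 2 (n : ℝ) + ∑ a ∈ T, Real.logb 2 (Nat.factorial (m a) : ℝ) := by
      push_cast
      rw [Real.logb_mul (by
        have : (0:ℝ) < (n:ℝ) := by exact_mod_cast hn0.trans_le (le_of_eq hn.symm) -- fix
        positivity) (by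
        apply ne_of_gt; apply Finset.prod_pos; intro a _
        exact_mod_cast Nat.factorial_pos (m a))]
      rw [Real.logb_prod _ _ (by
        intro a _
        exact ne_of_gt (by exact_mod_cast Nat.factorial_pos (m a)))]
      rw [Real.logb_pow]
    rw [e1, e2] at h1
    exact h1
  -- step 1 : termwise ceiling bound
  have step1 : ((∑ i : Fin S.length, if i.val = 0 then 0 else
        ⌈Real.logb 2 ((i.val : ℝ) /
          ((max ((S.take i.val).count (S.get i)) 1 : ℕ) : ℝ))⌉ + 1 : ℤ) : ℝ) ≤
      ∑ i : Fin S.length, (Real.logb 2 (i.val : ℝ)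
        - Real.logb 2 ((max ((S.take i.val).count (S.get i)) 1 : ℕ) : ℝ)
        + (if i.val = 0 then (0:ℝ) else 2)) := by
    push_cast
    apply Finset.sum_le_sum
    intro i _
    by_cases hi : i.val = 0
    · simp [hi, Real.logb_zero, Real.logb_one]
    · rw [if_neg hi, if_neg hi]
      have hmaxpos : (0:ℝ) < (((S.take i.val).count (S.get i) : ℕ) : ℝ) ⊔ 1 :=
        lt_of_lt_of_le one_pos (le_max_right _ _)
      have hipos : (0:ℝ) < (i.val : ℝ) := by
        exact_mod_cast Nat.pos_of_ne_zero hi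
      have hceil := Int.ceil_lt_add_one (Real.logb 2 ((i.val : ℝ) /
          ((((S.take i.val).count (S.get i) : ℕ) : ℝ) ⊔ 1)))
      have hX := Real.logb_div (b := 2) (ne_of_gt hipos) (ne_of_gt hmaxpos)
      linarith [hceil, hX]
  have hsplit : ∑ i : Fin S.length, (Real.logb 2 (i.val : ℝ)
        - Real.logb 2 ((max ((S.take i.val).count (S.get i)) 1 : ℕ) : ℝ)
        + (if i.val = 0 then (0:ℝ) else 2))
      = (∑ i : Fin S.length, Real.logb 2 (i.val : ℝ))
        - (∑ i : Fin S.length,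
            Real.logb 2 ((max ((S.take i.val).count (S.get i)) 1 : ℕ) : ℝ))
        + ∑ i : Fin S.length, (if i.val = 0 then (0:ℝ) else 2) := by
    rw [Finset.sum_add_distrib, Finset.sum_sub_distrib]
  have hA : (∑ i : Fin S.length, Real.logb 2 (i.val : ℝ))
      = Real.logb 2 ((Nat.factorial (n-1) : ℕ) : ℝ) := by
    rw [Fin.sum_univ_eq_sum_range (fun j => Real.logb 2 (j : ℝ)) S.length]
    have h1 : ∀ j ∈ Finset.range S.length,
        Real.logb 2 (j : ℝ) = Real.logb 2 ((max j 1 : ℕ) : ℝ) := by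
      intro j _
      rcases Nat.eq_zero_or_pos j with h | h
      · subst h; simp
      · rw [max_eq_left h]
    rw [Finset.sum_congr rfl h1,
      ← Real.logb_prod _ _ (fun j _ => by
        have : (0:ℕ) < max j 1 := Nat.lt_of_lt_of_le Nat.zero_lt_one (le_max_right _ _)
        exact ne_of_gt (by exact_mod_cast this)),
      ← Nat.cast_prod, prodmax, ← hn]
  have hB : (∑ i : Fin S.length,
        Real.logb 2 ((max ((S.take i.val).count (S.get i)) 1 : ℕ) : ℝ))
      = ∑ a ∈ T, Real.logb 2 ((Nat.factorial (m a - 1) : ℕ) : ℝ) := by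
    have hget : ∀ i : Fin S.length,
        (S.take i.val).count (S.get i) = (S.take i.val).count (S.getD i.val d) := by
      intro i
      rw [List.getD_eq_getElem _ _ i.isLt, List.get_eq_getElem]
    calc (∑ i : Fin S.length,
        Real.logb 2 ((max ((S.take i.val).count (S.get i)) 1 : ℕ) : ℝ))
        = ∑ i ∈ Finset.range S.length,
            Real.logb 2 ((max ((S.take i).count (S.getD i d)) 1 : ℕ) : ℝ) := by
          rw [← Fin.sum_univ_eq_sum_range
            (fun j => Real.logb 2 ((max ((S.take j).count (S.getD j d)) 1 : ℕ) : ℝ))]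
          exact Finset.sum_congr rfl (fun i _ => by rw [hget i])
      _ = Real.logb 2 ((∏ i ∈ Finset.range S.length,
            max ((S.take i).count (S.getD i d)) 1 : ℕ) : ℝ) := by
          rw [← Real.logb_prod _ _ (fun j _ => by
            have : (0:ℕ) < max ((S.take j).count (S.getD j d)) 1 :=
              Nat.lt_of_lt_of_le Nat.zero_lt_one (le_max_right _ _)
            exact ne_of_gt (by exact_mod_cast this)), ← Nat.cast_prod]
      _ = Real.logb 2 ((∏ a ∈ T, Nat.factorial (m a - 1) : ℕ) : ℝ) := by
          rw [lemC S d]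
      _ = ∑ a ∈ T, Real.logb 2 ((Nat.factorial (m a - 1) : ℕ) : ℝ) := by
          rw [Nat.cast_prod,
            Real.logb_prod _ _ (fun a _ =>
              ne_of_gt (by exact_mod_cast Nat.factorial_pos (m a - 1)))]
  have hCb : (∑ i : Fin S.length, (if i.val = 0 then (0:ℝ) else 2)) ≤ 2 * (n:ℝ) := by
    calc (∑ i : Fin S.length, (if i.val = 0 then (0:ℝ) else 2))
        ≤ ∑ _i : Fin S.length, (2:ℝ) :=
          Finset.sum_le_sum (fun i _ => by split <;> norm_num)
      _ = 2 * (n:ℝ) := by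
          rw [Finset.sum_const, Finset.card_univ, Fintype.card_fin, hn]
          push_cast; ring
  have hfac_n : Real.logb 2 ((Nat.factorial (n-1) : ℕ) : ℝ)
      = Real.logb 2 ((Nat.factorial n : ℕ) : ℝ) - Real.logb 2 (n : ℝ) := by
    have h := Nat.mul_factorial_pred (show 0 < n by omega).ne'
    have h2 : ((n:ℝ)) * ((Nat.factorial (n-1) : ℕ) : ℝ) = ((Nat.factorial n : ℕ) : ℝ) := by
      exact_mod_cast h
    rw [← h2, Real.logb_mul (by positivity)
      (ne_of_gt (by exact_mod_cast Nat.factorial_pos (n-1)))]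
    ring
  have hfac_m : ∀ a ∈ T, Real.logb 2 ((Nat.factorial (m a - 1) : ℕ) : ℝ)
      = Real.logb 2 ((Nat.factorial (m a) : ℕ) : ℝ) - Real.logb 2 ((m a) : ℝ) := by
    intro a ha
    have h := Nat.mul_factorial_pred (Nat.one_le_iff_ne_zero.mp (hm1 a ha))
    have h2 : ((m a : ℝ)) * ((Nat.factorial (m a - 1) : ℕ) : ℝ)
        = ((Nat.factorial (m a) : ℕ) : ℝ) := by exact_mod_cast h
    have hma : (0:ℝ) < (m a : ℝ) := by exact_mod_cast hm1 a ha
    rw [← h2, Real.logb_mul (ne_of_gt hma)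
      (ne_of_gt (by exact_mod_cast Nat.factorial_pos (m a - 1)))]
    ring
  have hBsum : ∑ a ∈ T, Real.logb 2 ((Nat.factorial (m a - 1) : ℕ) : ℝ)
      = (∑ a ∈ T, Real.logb 2 ((Nat.factorial (m a) : ℕ) : ℝ))
        - ∑ a ∈ T, Real.logb 2 ((m a) : ℝ) := by
    rw [← Finset.sum_sub_distrib]
    exact Finset.sum_congr rfl hfac_m
  have hHn : (n:ℝ) * H = (n:ℝ) * Real.logb 2 (n:ℝ)
      - ∑ a ∈ T, (m a : ℝ) * Real.logb 2 ((m a) : ℝ) := by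
    rw [hH, Finset.mul_sum]
    have hterm : ∀ a ∈ T, (n:ℝ) * (((m a : ℕ):ℝ)/(n:ℝ) * Real.logb 2 ((n:ℝ)/((m a : ℕ):ℝ)))
        = (m a : ℝ) * Real.logb 2 (n:ℝ) - (m a : ℝ) * Real.logb 2 ((m a) : ℝ) := by
      intro a ha
      have hnne : (n:ℝ) ≠ 0 := by positivity
      have hma : (0:ℝ) < (m a : ℝ) := by exact_mod_cast hm1 a ha
      rw [Real.logb_div hnne (ne_of_gt hma)]
      field_simp
    rw [Finset.sum_congr rfl hterm, Finset.sum_sub_distrib, ← Finset.sum_mul]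
    have hcast : (∑ a ∈ T, (m a : ℝ)) = (n:ℝ) := by
      rw [← Nat.cast_sum, hsum]
    rw [hcast]
  have hSlog : ∑ a ∈ T, Real.logb 2 ((m a) : ℝ) ≤ (σ:ℝ) * Real.logb 2 (n:ℝ) := by
    calc ∑ a ∈ T, Real.logb 2 ((m a) : ℝ)
        ≤ ∑ _a ∈ T, Real.logb 2 (n:ℝ) :=
          Finset.sum_le_sum (fun a ha => logb_nat_le (hm1 a ha) (hmn a ha))
      _ = (σ:ℝ) * Real.logb 2 (n:ℝ) := by
          rw [Finset.sum_const, hσ, hT, nsmul_eq_mul]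
  have hln : 0 ≤ Real.logb 2 (n:ℝ) :=
    Real.logb_nonneg one_lt_two (by exact_mod_cast Nat.one_le_iff_ne_zero.mpr (by omega))
  have hσ0 : (0:ℝ) ≤ (σ:ℝ) := Nat.cast_nonneg σ
  have hexp : ((σ:ℝ) + 1) * (Real.logb 2 (n:ℝ) + 2)
      = (σ:ℝ) * Real.logb 2 (n:ℝ) + 2*(σ:ℝ) + Real.logb 2 (n:ℝ) + 2 := by ring
  rw [hA, hB, hBsum, hfac_n] at hsplit
  calc ((∑ i : Fin S.length, if i.val = 0 then 0 else
        ⌈Real.logb 2 ((i.val : ℝ) /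
          ((max ((S.take i.val).count (S.get i)) 1 : ℕ) : ℝ))⌉ + 1 : ℤ) : ℝ)
      ≤ _ := step1
    _ ≤ (n:ℝ) * H + 2 * (n:ℝ) + ((σ:ℝ) + 1) * (Real.logb 2 (n:ℝ) + 2) := by
        rw [hsplit]
        nlinarith [hlogN, hHn, hSlog, hCb, hln, hσ0, hexp]
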